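/- With the notation above, the depth of the cycle Vᵢ equals Γᵢ; that is, min_{∂Vᵢ} H − min_{Vᵢ} H = Γᵢ. -/

import Mathlib

open SimpleGraph

variable {Ω : Type*}

/-- The height of a walk: the maximum of the energy `H` along its support. -/
noncomputable def walkHeight (H : Ω → ℝ) {G : SimpleGraph Ω} {a b : Ω} (w : G.Walk a b) : ℝ :=
  (w.support.map H).foldr max (H b)

/-- The communication height between two vertices: minimal height over all paths. -/
noncomputable def commHeight (G : SimpleGraph Ω) (H : Ω → ℝ) (a b : Ω) : ℝ :=
  sInf {h : ℝ | ∃ w : G.Walk a b, walkHeight H w = h}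

/-- Outer boundary of a set of vertices. -/
def outerBoundary (G : SimpleGraph Ω) (A : Set Ω) : Set Ω :=
  {ξ | ξ ∉ A ∧ ∃ η ∈ A, G.Adj ξ η}

/-- A (nontrivial) cycle: nonempty, connected, proper, with `max_C H < min_{∂C} H`. -/
def IsCycleSet (G : SimpleGraph Ω) (H : Ω → ℝ) (C : Set Ω) : Prop :=
  C.Nonempty ∧ (G.induce C).Connected ∧ C ≠ Set.univ ∧
    ∀ η ∈ C, ∀ ξ ∈ outerBoundary G C, H η < H ξ

/-- A stable plateau: nonempty, connected, constant energy, strictly higher on the boundary. -/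
def IsStablePlateau (G : SimpleGraph Ω) (H : Ω → ℝ) (P : Set Ω) : Prop :=
  P.Nonempty ∧ (G.induce P).Connected ∧ (∀ x ∈ P, ∀ y ∈ P, H x = H y) ∧
    ∀ x ∈ P, ∀ ζ ∈ outerBoundary G P, H x < H ζ

/-- Communication height between two sets. -/
noncomputable def commHeightSet (G : SimpleGraph Ω) (H : Ω → ℝ) (A B : Set Ω) : ℝ :=
  sInf {h : ℝ | ∃ a ∈ A, ∃ b ∈ B, commHeight G H a b = h}

/-- The bottom of a set: the minimizers of `H` on it. -/
def bottom (H : Ω → ℝ) (C : Set Ω) : Set Ω := {x ∈ C | ∀ y ∈ C, H x ≤ H y}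

/-- `A` is a connected component of `S`: a maximal nonempty connected subset of `S`. -/
def IsConnectedComponentOf (G : SimpleGraph Ω) (S A : Set Ω) : Prop :=
  A ⊆ S ∧ A.Nonempty ∧ (G.induce A).Connected ∧
    ∀ B : Set Ω, A ⊆ B → B ⊆ S → (G.induce B).Connected → B = A

section Aux

variable {G : SimpleGraph Ω} {H : Ω → ℝ} {a b c : Ω} {A B Q R : Set Ω}

lemma walkHeight_nil : walkHeight H (Walk.nil : G.Walk a a) = H a := by
  simp [walkHeight]

lemma walkHeight_cons (h : G.Adj a b) (w : G.Walk b c) :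
    walkHeight H (Walk.cons h w) = max (H a) (walkHeight H w) := by
  simp [walkHeight]

lemma le_walkHeight_of_mem {w : G.Walk a b} {x : Ω} (hx : x ∈ w.support) :
    H x ≤ walkHeight H w := by
  induction w with
  | nil => simp at hx; simp [hx, walkHeight_nil]
  | cons h w ih =>
    rw [walkHeight_cons]
    rw [Walk.support_cons, List.mem_cons] at hx
    rcases hx with rfl | hx
    · exact le_max_left _ _
    · exact le_max_of_le_right (ih hx)

lemma exists_walkHeight_eq (w : G.Walk a b) : ∃ x ∈ w.support, walkHeight H w = H x := by
  induction w with
  | nil => exact ⟨_, by simp, walkHeight_nil⟩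
  | @cons u v c' h w ih =>
    obtain ⟨x, hx, hx'⟩ := ih
    rw [walkHeight_cons]
    rcases le_total (H u) (walkHeight H w) with h1 | h1
    · exact ⟨x, by simp [hx], by rw [max_eq_right h1, hx']⟩
    · exact ⟨u, by simp, by rw [max_eq_left h1]⟩

lemma walkHeight_le_iff {w : G.Walk a b} {r : ℝ} :
    walkHeight H w ≤ r ↔ ∀ x ∈ w.support, H x ≤ r := by
  constructor
  · exact fun h x hx => (le_walkHeight_of_mem hx).trans h
  · intro h
    obtain ⟨x, hx, hx'⟩ := exists_walkHeight_eq w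
    exact hx' ▸ h x hx

lemma walkHeight_append (w₁ : G.Walk a b) (w₂ : G.Walk b c) :
    walkHeight H (w₁.append w₂) = max (walkHeight H w₁) (walkHeight H w₂) := by
  induction w₁ with
  | nil =>
    simp only [Walk.nil_append, walkHeight_nil]
    exact (max_eq_right (le_walkHeight_of_mem w₂.start_mem_support)).symm
  | cons h w ih =>
    simp only [Walk.cons_append, walkHeight_cons, ih, max_assoc]

lemma commHeight_bddBelow : BddBelow {h : ℝ | ∃ w : G.Walk a b, walkHeight H w = h} :=
  ⟨H a, fun _ ⟨w, hw⟩ => hw ▸ le_walkHeight_of_mem w.start_mem_support⟩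

lemma commHeight_set_finite [Fintype Ω] :
    {h : ℝ | ∃ w : G.Walk a b, walkHeight H w = h}.Finite := by
  apply (Set.finite_range H).subset
  rintro h ⟨w, rfl⟩
  obtain ⟨x, _, hx⟩ := exists_walkHeight_eq w
  exact ⟨x, hx.symm⟩

lemma commHeight_le_walkHeight (w : G.Walk a b) : commHeight G H a b ≤ walkHeight H w :=
  csInf_le commHeight_bddBelow ⟨w, rfl⟩

lemma exists_walk_commHeight [Fintype Ω] (hr : G.Reachable a b) :
    ∃ w : G.Walk a b, walkHeight H w = commHeight G H a b := by
  have hne : {h : ℝ | ∃ w : G.Walk a b, walkHeight H w = h}.Nonempty := by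
    obtain ⟨w⟩ := hr; exact ⟨_, w, rfl⟩
  exact (hne.csInf_mem commHeight_set_finite : _)

lemma le_commHeight_left (hr : G.Reachable a b) : H a ≤ commHeight G H a b := by
  apply le_csInf (by obtain ⟨w⟩ := hr; exact ⟨_, w, rfl⟩)
  rintro h ⟨w, rfl⟩
  exact le_walkHeight_of_mem w.start_mem_support

lemma le_commHeight_right (hr : G.Reachable a b) : H b ≤ commHeight G H a b := by
  apply le_csInf (by obtain ⟨w⟩ := hr; exact ⟨_, w, rfl⟩)
  rintro h ⟨w, rfl⟩
  exact le_walkHeight_of_mem w.end_mem_support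

lemma commHeight_self : commHeight G H a a = H a := by
  apply le_antisymm
  · exact (commHeight_le_walkHeight Walk.nil).trans (le_of_eq walkHeight_nil)
  · exact le_commHeight_left (Reachable.refl a)

lemma commHeight_triangle [Fintype Ω] (hab : G.Reachable a b) (hbc : G.Reachable b c) :
    commHeight G H a c ≤ max (commHeight G H a b) (commHeight G H b c) := by
  obtain ⟨w₁, hw₁⟩ := exists_walk_commHeight (H := H) hab
  obtain ⟨w₂, hw₂⟩ := exists_walk_commHeight (H := H) hbc
  calc commHeight G H a c ≤ walkHeight H (w₁.append w₂) := commHeight_le_walkHeight _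
    _ = max (commHeight G H a b) (commHeight G H b c) := by
        rw [walkHeight_append, hw₁, hw₂]

lemma chs_bddBelow [Fintype Ω] :
    BddBelow {h : ℝ | ∃ a ∈ A, ∃ b ∈ B, commHeight G H a b = h} := by
  obtain ⟨m, hm⟩ := (Set.finite_range H).bddBelow
  refine ⟨min m 0, ?_⟩
  rintro h ⟨a, ha, b, hb, rfl⟩
  by_cases hr : G.Reachable a b
  · exact (min_le_left m 0).trans ((hm ⟨a, rfl⟩).trans (le_commHeight_left hr))
  · have : {h : ℝ | ∃ w : G.Walk a b, walkHeight H w = h} = ∅ := by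
      ext h; simp only [Set.mem_setOf_eq, Set.mem_empty_iff_false, iff_false]
      rintro ⟨w, -⟩; exact hr ⟨w⟩
    rw [commHeight, this, Real.sInf_empty]
    exact min_le_right m 0

lemma commHeightSet_le [Fintype Ω] (ha : a ∈ A) (hb : b ∈ B) :
    commHeightSet G H A B ≤ commHeight G H a b :=
  csInf_le chs_bddBelow ⟨a, ha, b, hb, rfl⟩

lemma exists_commHeightSet_eq [Fintype Ω] (hA : A.Nonempty) (hB : B.Nonempty) :
    ∃ a ∈ A, ∃ b ∈ B, commHeight G H a b = commHeightSet G H A B := by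
  have hfin : {h : ℝ | ∃ a ∈ A, ∃ b ∈ B, commHeight G H a b = h}.Finite := by
    have : {h : ℝ | ∃ a ∈ A, ∃ b ∈ B, commHeight G H a b = h} ⊆
        Set.range (fun q : Ω × Ω => commHeight G H q.1 q.2) := by
      rintro h ⟨a, ha, b, hb, rfl⟩; exact ⟨(a, b), rfl⟩
    exact (Set.finite_range _).subset this
  have hne : {h : ℝ | ∃ a ∈ A, ∃ b ∈ B, commHeight G H a b = h}.Nonempty := by
    obtain ⟨a, ha⟩ := hA; obtain ⟨b, hb⟩ := hB; exact ⟨_, a, ha, b, hb, rfl⟩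
  exact (hne.csInf_mem hfin : _)

lemma commHeightSet_mono_right [Fintype Ω] (hA : A.Nonempty) (hB : B.Nonempty) {B' : Set Ω}
    (hBB : B ⊆ B') : commHeightSet G H A B' ≤ commHeightSet G H A B := by
  obtain ⟨a, ha, b, hb, hab⟩ := exists_commHeightSet_eq (G := G) (H := H) hA hB
  exact hab ▸ commHeightSet_le ha (hBB hb)

/-- Crossing a set boundary along a walk. -/
lemma exists_boundary_of_walk (w : G.Walk a b) :
    a ∈ A → b ∉ A → ∃ x ∈ w.support, x ∈ outerBoundary G A := by
  induction w with
  | nil => exact fun ha hb => absurd ha hb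
  | @cons u v c' h w ih =>
    intro ha hb
    by_cases hv : v ∈ A
    · obtain ⟨x, hx, hx'⟩ := ih hv hb
      exact ⟨x, by simp [hx], hx'⟩
    · exact ⟨v, by simp, hv, u, ha, h.symm⟩

/-- A walk in an induced subgraph maps to a walk in `G` with support inside `A`. -/
lemma walk_of_induce {x y : A} (w : (G.induce A).Walk x y) :
    ∃ w' : G.Walk x.val y.val, ∀ z ∈ w'.support, z ∈ A := by
  induction w with
  | nil => exact ⟨Walk.nil, by simp⟩
  | @cons u v c' h w ih =>
    obtain ⟨w', hw'⟩ := ih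
    refine ⟨Walk.cons (show G.Adj u.val v.val from h) w', ?_⟩
    intro z hz
    rw [Walk.support_cons, List.mem_cons] at hz
    rcases hz with rfl | hz
    · exact u.2
    · exact hw' z hz

/-- A walk in `G` with support in `A` gives reachability in the induced graph. -/
lemma reachable_induce_of_walk (w : G.Walk a b) (hw : ∀ z ∈ w.support, z ∈ A) :
    (G.induce A).Reachable ⟨a, hw a w.start_mem_support⟩ ⟨b, hw b w.end_mem_support⟩ := by
  induction w with
  | nil => rfl
  | @cons u v c' h w ih =>
    have hv : ∀ z ∈ w.support, z ∈ A := fun z hz => hw z (by simp [hz])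
    have h1 : (G.induce A).Adj ⟨u, hw u (by simp)⟩ ⟨v, hv v w.start_mem_support⟩ := h
    exact (h1.reachable).trans (ih hv)

lemma reachable_induce_mono {B : Set Ω} (hAB : A ⊆ B) {x y : Ω} (hx : x ∈ A) (hy : y ∈ A)
    (h : (G.induce A).Reachable ⟨x, hx⟩ ⟨y, hy⟩) :
    (G.induce B).Reachable ⟨x, hAB hx⟩ ⟨y, hAB hy⟩ := by
  obtain ⟨w⟩ := h
  obtain ⟨w', hw'⟩ := walk_of_induce w
  exact reachable_induce_of_walk (A := B) w' (fun z hz => hAB (hw' z hz))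

lemma plateau_of_no_descent [Fintype Ω] (hG : G.Connected) (η : Ω)
    (hno : ∀ x, commHeight G H η x ≤ H η → H η ≤ H x) :
    IsStablePlateau G H {x | commHeight G H η x ≤ H η} := by
  classical
  set A := {x | commHeight G H η x ≤ H η} with hA
  have hηA : η ∈ A := by simp [hA, commHeight_self]
  have hconst : ∀ x ∈ A, H x = H η := fun x hx =>
    le_antisymm ((le_commHeight_right (hG.preconnected η x)).trans hx) (hno x hx)
  have hwalk : ∀ x ∈ A, ∃ w : G.Walk η x, ∀ z ∈ w.support, z ∈ A := by
    intro x hx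
    obtain ⟨w, hw⟩ := exists_walk_commHeight (H := H) (hG.preconnected η x)
    refine ⟨w, fun z hz => ?_⟩
    have h1 : walkHeight H (w.takeUntil z hz) ≤ walkHeight H w := by
      rw [walkHeight_le_iff]
      exact fun y hy => le_walkHeight_of_mem (w.support_takeUntil_subset hz hy)
    have : commHeight G H η z ≤ walkHeight H w :=
      (commHeight_le_walkHeight (w.takeUntil z hz)).trans h1
    exact this.trans (hw ▸ hx)
  have hbd : ∀ ζ ∈ outerBoundary G A, H η < H ζ := by
    rintro ζ ⟨hζ, x, hxA, hadj⟩
    by_contra hle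
    push_neg at hle
    apply hζ
    obtain ⟨w, hw⟩ := exists_walk_commHeight (H := H) (hG.preconnected η x)
    have : commHeight G H η ζ ≤ walkHeight H (w.append (Walk.cons hadj.symm Walk.nil)) :=
      commHeight_le_walkHeight _
    rw [walkHeight_append, walkHeight_cons, walkHeight_nil, hw] at this
    have : commHeight G H η ζ ≤ H η := by
      refine this.trans (max_le hxA (max_le ?_ hle))
      exact (hconst x hxA).le
    exact this
  refine ⟨⟨η, hηA⟩, ?_, fun x hx y hy => (hconst x hx).trans (hconst y hy).symm,
    fun x hx ζ hζ => (hconst x hx) ▸ hbd ζ hζ⟩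
  have : Nonempty ↑A := ⟨⟨η, hηA⟩⟩
  refine ⟨fun x y => ?_⟩
  obtain ⟨wx, hwx⟩ := hwalk x.val x.2
  obtain ⟨wy, hwy⟩ := hwalk y.val y.2
  have hx := reachable_induce_of_walk wx hwx
  have hy := reachable_induce_of_walk wy hwy
  have ex : (⟨x.val, _⟩ : ↑A) = x := Subtype.ext rfl
  have ey : (⟨y.val, _⟩ : ↑A) = y := Subtype.ext rfl
  exact ex ▸ ey ▸ (hx.symm.trans hy)

lemma exists_stablePlateau_below [Fintype Ω] (hG : G.Connected) (η : Ω) :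
    ∃ Q : Set Ω, IsStablePlateau G H Q ∧ ∃ q ∈ Q, commHeight G H η q ≤ H η := by
  classical
  suffices h : ∀ n : ℕ, ∀ η : Ω, {x | H x < H η}.ncard ≤ n →
      ∃ Q : Set Ω, IsStablePlateau G H Q ∧ ∃ q ∈ Q, commHeight G H η q ≤ H η by
    exact h _ η le_rfl
  intro n
  induction n with
  | zero =>
    intro η hcard
    have hempty : {x | H x < H η} = ∅ :=
      Set.ncard_eq_zero (Set.toFinite _) |>.mp (Nat.le_zero.mp hcard)
    refine ⟨_, plateau_of_no_descent hG η (fun x _ => ?_), η,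
      by simp [commHeight_self], by simp [commHeight_self]⟩
    by_contra h
    push_neg at h
    have : x ∈ {x | H x < H η} := h
    rw [hempty] at this
    exact this
  | succ n ih =>
    intro η hcard
    by_cases hlow : ∃ x, commHeight G H η x ≤ H η ∧ H x < H η
    · obtain ⟨x, hx1, hx2⟩ := hlow
      have hsub : {y | H y < H x} ⊂ {y | H y < H η} := by
        rw [Set.ssubset_def]
        constructor
        · intro y hy
          simp only [Set.mem_setOf_eq] at hy ⊢
          exact lt_trans hy hx2
        · intro hcon
          have h2 := hcon (show x ∈ {y | H y < H η} from hx2)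
          simp only [Set.mem_setOf_eq] at h2
          exact lt_irrefl _ h2
      have : {y | H y < H x}.ncard < {x | H x < H η}.ncard :=
        Set.ncard_lt_ncard hsub (Set.toFinite _)
      obtain ⟨Q, hQ, q, hqQ, hq⟩ := ih x (by omega)
      refine ⟨Q, hQ, q, hqQ, ?_⟩
      calc commHeight G H η q ≤ max (commHeight G H η x) (commHeight G H x q) :=
            commHeight_triangle (hG.preconnected η x) (hG.preconnected x q)
        _ ≤ H η := max_le hx1 (hq.trans hx2.le)
    · push_neg at hlow
      exact ⟨_, plateau_of_no_descent hG η (fun x hx => hlow x hx), η,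
        by simp [commHeight_self], by simp [commHeight_self]⟩

lemma stablePlateau_subset_eq (hQ : IsStablePlateau G H Q) (hR : IsStablePlateau G H R)
    (hsub : Q ⊆ R) : Q = R := by
  obtain ⟨hQne, hQconn, hQconst, hQbd⟩ := hQ
  obtain ⟨hRne, hRconn, hRconst, hRbd⟩ := hR
  apply Set.Subset.antisymm hsub
  intro z hz
  by_contra hzQ
  obtain ⟨q, hq⟩ := hQne
  obtain ⟨w⟩ := hRconn.preconnected ⟨q, hsub hq⟩ ⟨z, hz⟩
  obtain ⟨w', hw'⟩ := walk_of_induce w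
  obtain ⟨ζ, hζs, hζb⟩ := exists_boundary_of_walk (A := Q) w' hq hzQ
  have hζR : ζ ∈ R := hw' ζ hζs
  have h1 : H q < H ζ := hQbd q hq ζ hζb
  have h2 : H q = H ζ := hRconst q (hsub hq) ζ hζR
  exact absurd h2 (ne_of_lt h1)

lemma stablePlateau_eq_of_mem (hQ : IsStablePlateau G H Q) (hR : IsStablePlateau G H R)
    {x : Ω} (hxQ : x ∈ Q) (hxR : x ∈ R) : Q = R := by
  obtain ⟨hQne, hQconn, hQconst, hQbd⟩ := hQ
  obtain ⟨hRne, hRconn, hRconst, hRbd⟩ := hR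
  have hU : IsStablePlateau G H (Q ∪ R) := by
    have hconst : ∀ y ∈ Q ∪ R, H y = H x := by
      rintro y (hy | hy)
      · exact hQconst y hy x hxQ
      · exact hRconst y hy x hxR
    refine ⟨⟨x, Or.inl hxQ⟩, ?_, fun y hy z hz => (hconst y hy).trans (hconst z hz).symm, ?_⟩
    · have key : ∀ u (hu : u ∈ Q ∪ R),
          (G.induce (Q ∪ R)).Reachable ⟨u, hu⟩ ⟨x, Or.inl hxQ⟩ := by
        rintro u (hu | hu)
        · exact reachable_induce_mono Set.subset_union_left hu hxQ
            (hQconn.preconnected ⟨u, hu⟩ ⟨x, hxQ⟩)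
        · exact reachable_induce_mono Set.subset_union_right hu hxR
            (hRconn.preconnected ⟨u, hu⟩ ⟨x, hxR⟩)
      have : Nonempty ↑(Q ∪ R) := ⟨⟨x, Or.inl hxQ⟩⟩
      exact ⟨fun u v => (key u.val u.2).trans (key v.val v.2).symm⟩
    · rintro y hy ζ ⟨hζ, η, hη, hadj⟩
      rw [hconst y hy]
      rcases hη with hη | hη
      · have := hQbd η hη ζ ⟨fun h => hζ (Or.inl h), η, hη, hadj⟩
        rwa [hQconst η hη x hxQ] at this
      · have := hRbd η hη ζ ⟨fun h => hζ (Or.inr h), η, hη, hadj⟩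
        rwa [hRconst η hη x hxR] at this
  have e1 : Q = Q ∪ R :=
    stablePlateau_subset_eq ⟨hQne, hQconn, hQconst, hQbd⟩ hU Set.subset_union_left
  have e2 : R = Q ∪ R :=
    stablePlateau_subset_eq ⟨hRne, hRconn, hRconst, hRbd⟩ hU Set.subset_union_right
  rw [e1]; exact e2.symm

end Aux

/-- the depth of the valley `Vᵢ` equals the initial depth `Γᵢ`. -/
theorem depth_of_valley [Fintype Ω] (G : SimpleGraph Ω) (hG : G.Connected) (H : Ω → ℝ)
    (ν : ℕ) (hν : 2 ≤ ν) (P : Fin ν → Set Ω)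
    (hP : ∀ i, IsStablePlateau G H (P i))
    (hPinj : Function.Injective P)
    (hPall : ∀ Q : Set Ω, IsStablePlateau G H Q → ∃ i, Q = P i)
    (p : Fin ν → Ω) (hp : ∀ i, p i ∈ P i)
    (Γ : Fin ν → ℝ)
    (hΓ : ∀ i, Γ i = commHeightSet G H (P i) {x | ∃ j, j ≠ i ∧ x ∈ P j} - H (p i))
    (V : Fin ν → Set Ω)
    (hV : ∀ i, V i = {η | commHeightSet G H (P i) {η} - H (p i) < Γ i}) :
    ∀ i, sInf (H '' outerBoundary G (V i)) - sInf (H '' V i) = Γ i := by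
  classical
  intro i
  have hpre := hG.preconnected
  set O : Set Ω := {x | ∃ j, j ≠ i ∧ x ∈ P j} with hO
  have hOne : O.Nonempty := by
    have : Nontrivial (Fin ν) := Fin.nontrivial_iff_two_le.mpr hν
    obtain ⟨j, hj⟩ := exists_ne i
    obtain ⟨b, hb⟩ := (hP j).1
    exact ⟨b, j, hj, hb⟩
  have hdisj : ∀ j, j ≠ i → ∀ x, x ∈ P j → x ∉ P i := by
    intro j hj x hxj hxi
    exact hj (hPinj (stablePlateau_eq_of_mem (hP j) (hP i) hxj hxi))
  have hconsti : ∀ x ∈ P i, H x = H (p i) := fun x hx => (hP i).2.2.1 x hx (p i) (hp i)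
  have hΦdef : commHeightSet G H (P i) O = H (p i) + Γ i := by rw [hΓ i]; ring
  have hΓpos : 0 < Γ i := by
    obtain ⟨a, ha, b, hb, hab⟩ := exists_commHeightSet_eq (G := G) (H := H) (hP i).1 hOne
    obtain ⟨w, hw⟩ := exists_walk_commHeight (H := H) (hpre a b)
    obtain ⟨j, hj, hbj⟩ := hb
    obtain ⟨ζ, hζs, hζb⟩ := exists_boundary_of_walk w ha (hdisj j hj b hbj)
    have h1 : H ζ ≤ commHeight G H a b := hw ▸ le_walkHeight_of_mem hζs
    have h2 : H a < H ζ := (hP i).2.2.2 a ha ζ hζb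
    have h3 : H a = H (p i) := hconsti a ha
    have h4 : commHeight G H a b = H (p i) + Γ i := hab.trans hΦdef
    linarith
  have hmemV : ∀ η, η ∈ V i ↔ commHeightSet G H (P i) {η} < H (p i) + Γ i := by
    intro η
    rw [hV i]
    simp only [Set.mem_setOf_eq]
    constructor <;> intro h <;> linarith
  have hattain : ∀ η, ∃ a ∈ P i, commHeight G H a η = commHeightSet G H (P i) {η} := by
    intro η
    obtain ⟨a, ha, b, hb, hab⟩ :=
      exists_commHeightSet_eq (G := G) (H := H) (hP i).1 (Set.singleton_nonempty η)
    rw [Set.mem_singleton_iff] at hb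
    subst hb
    exact ⟨a, ha, hab⟩
  have hΦη_ge : ∀ η, H η ≤ commHeightSet G H (P i) {η} ∧
      H (p i) ≤ commHeightSet G H (P i) {η} := by
    intro η
    obtain ⟨a, ha, hab⟩ := hattain η
    constructor
    · rw [← hab]; exact le_commHeight_right (hpre a η)
    · rw [← hab, ← hconsti a ha]; exact le_commHeight_left (hpre a η)
  have hpV : p i ∈ V i := by
    rw [hmemV]
    have h1 : commHeightSet G H (P i) {p i} ≤ commHeight G H (p i) (p i) :=
      commHeightSet_le (hp i) (Set.mem_singleton _)
    rw [commHeight_self] at h1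
    linarith
  have hVlow : ∀ η ∈ V i, H (p i) ≤ H η := by
    intro η hη
    by_contra hlt
    push_neg at hlt
    obtain ⟨Q, hQ, q, hqQ, hq⟩ := exists_stablePlateau_below (H := H) hG η
    obtain ⟨j, hQj⟩ := hPall Q hQ
    rw [hQj] at hqQ
    obtain ⟨a, ha, hab⟩ := hattain η
    by_cases hji : j = i
    · rw [hji] at hqQ
      have h1 : H q ≤ commHeight G H η q := le_commHeight_right (hpre η q)
      have h2 : H q = H (p i) := hconsti q hqQ
      linarith
    · have hqO : q ∈ O := ⟨j, hji, hqQ⟩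
      have h1 : commHeightSet G H (P i) O ≤ commHeight G H a q := commHeightSet_le ha hqO
      have h2 : commHeight G H a q ≤ max (commHeight G H a η) (commHeight G H η q) :=
        commHeight_triangle (hpre a η) (hpre η q)
      rw [hmemV] at hη
      rw [hab] at h2
      have h3 : commHeight G H η q ≤ H η := hq
      have h4 : max (commHeightSet G H (P i) {η}) (commHeight G H η q) < H (p i) + Γ i :=
        max_lt hη (by linarith)
      linarith [hΦdef, le_trans h1 h2]
  have hVinf : sInf (H '' V i) = H (p i) := by
    apply le_antisymm
    · have hmem : H (p i) ∈ H '' V i := ⟨p i, hpV, rfl⟩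
      exact csInf_le (Set.toFinite _).bddBelow hmem
    · have hne : (H '' V i).Nonempty := ⟨H (p i), p i, hpV, rfl⟩
      apply le_csInf hne
      rintro r ⟨η, hη, rfl⟩
      exact hVlow η hη
  have hBlow : ∀ ξ ∈ outerBoundary G (V i), H (p i) + Γ i ≤ H ξ := by
    rintro ξ ⟨hξV, η, hηV, hadj⟩
    by_contra hlt
    push_neg at hlt
    apply hξV
    rw [hmemV] at hηV ⊢
    obtain ⟨a, ha, hab⟩ := hattain η
    obtain ⟨w, hw⟩ := exists_walk_commHeight (H := H) (hpre a η)
    have h1 : commHeightSet G H (P i) {ξ} ≤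
        walkHeight H (w.append (Walk.cons hadj.symm Walk.nil)) :=
      (commHeightSet_le ha (Set.mem_singleton _)).trans (commHeight_le_walkHeight _)
    rw [walkHeight_append, walkHeight_cons, walkHeight_nil, hw, hab] at h1
    have hHη : H η ≤ commHeightSet G H (P i) {η} := (hΦη_ge η).1
    calc commHeightSet G H (P i) {ξ} ≤
        max (commHeightSet G H (P i) {η}) (max (H η) (H ξ)) := h1
      _ < H (p i) + Γ i := max_lt hηV (max_lt (lt_of_le_of_lt hHη hηV) hlt)
  have hBex : ∃ ξ ∈ outerBoundary G (V i), H ξ ≤ H (p i) + Γ i := by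
    obtain ⟨a, ha, b, hb, hab⟩ := exists_commHeightSet_eq (G := G) (H := H) (hP i).1 hOne
    obtain ⟨w, hw⟩ := exists_walk_commHeight (H := H) (hpre a b)
    have haV : a ∈ V i := by
      rw [hmemV]
      have h1 : commHeightSet G H (P i) {a} ≤ commHeight G H a a := commHeightSet_le ha (Set.mem_singleton _)
      rw [commHeight_self] at h1
      have h2 : H a = H (p i) := hconsti a ha
      linarith
    have hbV : b ∉ V i := by
      rw [hmemV]
      push_neg
      have h1 : commHeightSet G H (P i) O ≤ commHeightSet G H (P i) {b} :=
        commHeightSet_mono_right (hP i).1 (Set.singleton_nonempty b)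
          (Set.singleton_subset_iff.mpr hb)
      rw [hΦdef] at h1
      exact h1
    obtain ⟨ξ, hξs, hξb⟩ := exists_boundary_of_walk w haV hbV
    refine ⟨ξ, hξb, ?_⟩
    have h1 : H ξ ≤ walkHeight H w := le_walkHeight_of_mem hξs
    rw [hw, hab, hΦdef] at h1
    exact h1
  have hBinf : sInf (H '' outerBoundary G (V i)) = H (p i) + Γ i := by
    obtain ⟨ξ, hξ, hle⟩ := hBex
    apply le_antisymm
    · have hmem : H ξ ∈ H '' outerBoundary G (V i) := ⟨ξ, hξ, rfl⟩
      exact (csInf_le (Set.toFinite _).bddBelow hmem).trans hle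
    · have hne : (H '' outerBoundary G (V i)).Nonempty := ⟨H ξ, ξ, hξ, rfl⟩
      apply le_csInf hne
      rintro r ⟨ζ, hζ, rfl⟩
      exact hBlow ζ hζ
  rw [hBinf, hVinf]
  ring
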